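/- Let S be a graded F-algebra concentrated in even degrees, n ≥ 1, R = S ⊗ F[u]/(u^{n+1}) with the truncated-product map ψ_A, and let d > 0 be even. Let (R̃, t, j) be a d-dimensional deformation of R, ψ̃ an extension of ψ_A to R̃, ũ ∈ R̃² an element with j(ũ) = 1 ⊗ u, and ξ̃1, …, ξ̃g ∈ R̃² elements with j(ξ̃i) ∈ S² ⊗ 1 for all i. Let R̃1 ⊆ R̃ be the subalgebra generated by t, ξ̃1, …, ξ̃g. Then: (a) ψ̃(x, ũ^n) = 0 for every x ∈ R̃1; and (b) every x ∈ R̃1 ∩ t·R̃ can be written as x = t·y for some y ∈ R̃ with j(y) ∈ S ⊗ 1. -/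

import Mathlib

/-- A finite-dimensional graded-commutative ℤ-graded `F`-algebra
("graded F-algebra" in the sense of Seidel's paper). -/
structure GradedFAlg (F : Type) [Field F] where
  carrier : Type
  [ring : Ring carrier]
  [alg : Algebra F carrier]
  grading : ℤ → Submodule F carrier
  [gradedAlgebra : GradedAlgebra grading]
  [findim : FiniteDimensional F carrier]
  gcomm : ∀ (i j : ℤ) (x y : carrier), x ∈ grading i → y ∈ grading j →
    x * y = ((-1 : F) ^ (i * j)) • (y * x)

attribute [instance] GradedFAlg.ring GradedFAlg.alg GradedFAlg.gradedAlgebra GradedFAlg.findim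

variable {F : Type} [Field F]

/-- A homomorphism of graded `F`-algebras. -/
structure GradedFAlg.Hom (A B : GradedFAlg F) where
  toAlgHom : A.carrier →ₐ[F] B.carrier
  graded : ∀ (i : ℤ) (x : A.carrier), x ∈ A.grading i → toAlgHom x ∈ B.grading i

/-- The identity homomorphism of graded `F`-algebras. -/
def GradedFAlg.Hom.id (A : GradedFAlg F) : GradedFAlg.Hom A A :=
  ⟨AlgHom.id F A.carrier, fun _ _ h => h⟩

/-- A `d`-dimensional (first order infinitesimal) deformation `(R̃, t, j)` of `A`:
`t ∈ R̃^d` with `t² = 0` whose annihilator is exactly `t·R̃`, and `j : R̃ → A`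
a surjective homomorphism of graded algebras with kernel `t·R̃`. -/
structure Deformation (F : Type) [Field F] (A : GradedFAlg F) (d : ℤ) where
  alg : GradedFAlg F
  t : alg.carrier
  t_mem : t ∈ alg.grading d
  t_sq : t * t = 0
  t_ann : ∀ x : alg.carrier, t * x = 0 ↔ ∃ y : alg.carrier, x = t * y
  j : GradedFAlg.Hom alg A
  j_surj : Function.Surjective j.toAlgHom
  j_ker : ∀ x : alg.carrier, j.toAlgHom x = 0 ↔ ∃ y : alg.carrier, x = t * y

/-- A morphism of deformations over a homomorphism `f` of graded `F`-algebras. -/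
structure DefMorphismOver {A B : GradedFAlg F} (f : GradedFAlg.Hom A B) {d : ℤ}
    (D1 : Deformation F A d) (D2 : Deformation F B d) where
  toHom : GradedFAlg.Hom D1.alg D2.alg
  map_t : toHom.toAlgHom D1.t = D2.t
  over_j : ∀ x, D2.j.toAlgHom (toHom.toAlgHom x) = f.toAlgHom (D1.j.toAlgHom x)

/-- Two deformations of `A` are isomorphic if there is a bijective morphism of
deformations (i.e. a morphism over the identity of `A`) between them. -/
def Deformation.Iso {A : GradedFAlg F} {d : ℤ} (D1 D2 : Deformation F A d) : Prop :=
  ∃ φ : DefMorphismOver (GradedFAlg.Hom.id A) D1 D2, Function.Bijective φ.toHom.toAlgHom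

/-- `R` is (a model of) the graded tensor product `S ⊗ F[u]/(u^{n+1})` with
`deg u = 2`: `ι : S → R` is a homomorphism of graded algebras, `u^{n+1} = 0`,
and the map `(s₀, …, s_n) ↦ Σᵢ ι(sᵢ)·uⁱ` is a linear bijection `S^{n+1} ≅ R`. -/
structure IsTensorCPn (S R : GradedFAlg F) (n : ℕ) (ι : GradedFAlg.Hom S R)
    (u : R.carrier) : Prop where
  u_mem : u ∈ R.grading 2
  u_pow : u ^ (n + 1) = 0
  free : Function.Bijective (fun c : Fin (n + 1) → S.carrier =>
    ∑ i : Fin (n + 1), ι.toAlgHom (c i) * u ^ (i : ℕ))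

/-- The bilinear map `ψ_A` on `R = S ⊗ F[u]/(u^{n+1})` is the truncated product:
`ψ_A(x ⊗ uⁱ, y ⊗ uʲ) = xy ⊗ u^{i+j−n−1}` if `i + j ≥ n + 1` and `= 0` otherwise. -/
def IsTruncatedProduct (S R : GradedFAlg F) (n : ℕ) (ι : GradedFAlg.Hom S R)
    (u : R.carrier) (ψA : R.carrier →ₗ[F] R.carrier →ₗ[F] R.carrier) : Prop :=
  ∀ (x y : S.carrier) (i j : ℕ), i ≤ n → j ≤ n →
    ψA (ι.toAlgHom x * u ^ i) (ι.toAlgHom y * u ^ j) =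
      if n + 1 ≤ i + j then ι.toAlgHom (x * y) * u ^ (i + j - (n + 1)) else 0

/-- An extension of the truncated product `ψ_A` to a deformation `(R̃, t, j)` of
`R = S ⊗ F[u]/(u^{n+1})`: a graded symmetric bilinear map `ψ̃` of degree
`−2(n+1)` satisfying (1') the associativity identity,
(2') `ψ̃(1,·) = ψ̃(t,·) = 0`, (3') `ψ̃(w,·) = 0` whenever `w ∈ R̃²` has
`j(w) ∈ S² ⊗ 1`, and (4') `j(ψ̃(x,y)) = ψ_A(j x, j y)`. -/
structure IsExtensionOfPsiA {F : Type} [Field F] {S R : GradedFAlg F} (n : ℕ)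
    (ι : GradedFAlg.Hom S R) (u : R.carrier)
    (ψA : R.carrier →ₗ[F] R.carrier →ₗ[F] R.carrier) {d : ℤ} (D : Deformation F R d)
    (ψt : D.alg.carrier →ₗ[F] D.alg.carrier →ₗ[F] D.alg.carrier) : Prop where
  deg : ∀ (i j : ℤ) (x y : D.alg.carrier), x ∈ D.alg.grading i → y ∈ D.alg.grading j →
    ψt x y ∈ D.alg.grading (i + j - 2 * ((n : ℤ) + 1))
  symm : ∀ (i j : ℤ) (x y : D.alg.carrier), x ∈ D.alg.grading i → y ∈ D.alg.grading j →
    ψt x y = ((-1 : F) ^ (i * j)) • ψt y x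
  assoc : ∀ x y z : D.alg.carrier,
    x * ψt y z - ψt (x * y) z + ψt x (y * z) - ψt x y * z = 0
  one : ∀ x : D.alg.carrier, ψt 1 x = 0
  t_zero : ∀ x : D.alg.carrier, ψt D.t x = 0
  div : ∀ w : D.alg.carrier, w ∈ D.alg.grading 2 →
    (∃ s : S.carrier, s ∈ S.grading 2 ∧ D.j.toAlgHom w = ι.toAlgHom s) →
    ∀ x : D.alg.carrier, ψt w x = 0
  compat : ∀ x y : D.alg.carrier,
    D.j.toAlgHom (ψt x y) = ψA (D.j.toAlgHom x) (D.j.toAlgHom y)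

/-- Let `S` be a graded `F`-algebra concentrated in even
degrees, `n ≥ 1`, `R = S ⊗ F[u]/(u^{n+1})` with the truncated product `ψ_A`,
and `d > 0` even. Let `(R̃, t, j)` be a `d`-dimensional deformation of `R`,
`ψ̃` an extension of `ψ_A` to `R̃`, `ũ ∈ R̃²` with `j(ũ) = 1 ⊗ u`, and
`ξ̃₁, …, ξ̃_g ∈ R̃²` with `j(ξ̃ᵢ) ∈ S² ⊗ 1`. Let `R̃1 ⊆ R̃` be the subalgebra
generated by `t, ξ̃₁, …, ξ̃_g`. Then:
(a) `ψ̃(x, ũⁿ) = 0` for every `x ∈ R̃1`; and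
(b) every `x ∈ R̃1 ∩ t·R̃` can be written as `x = t·y`
with `j(y) ∈ S ⊗ 1`. -/
theorem main_computation
    {F : Type} [Field F] (S R : GradedFAlg F)
    (hSeven : ∀ i : ℤ, Odd i → S.grading i = ⊥)
    (n : ℕ) (hn : 1 ≤ n) (ι : GradedFAlg.Hom S R) (u : R.carrier)
    (hT : IsTensorCPn S R n ι u)
    (ψA : R.carrier →ₗ[F] R.carrier →ₗ[F] R.carrier)
    (hψA : IsTruncatedProduct S R n ι u ψA)
    (d : ℤ) (hd : 0 < d) (heven : Even d)
    (D : Deformation F R d)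
    (ψt : D.alg.carrier →ₗ[F] D.alg.carrier →ₗ[F] D.alg.carrier)
    (hext : IsExtensionOfPsiA n ι u ψA D ψt)
    (ut : D.alg.carrier) (hut_mem : ut ∈ D.alg.grading 2)
    (hut : D.j.toAlgHom ut = u)
    (g : ℕ) (ξ : Fin g → D.alg.carrier)
    (hξ_mem : ∀ i : Fin g, ξ i ∈ D.alg.grading 2)
    (hξ : ∀ i : Fin g, ∃ s : S.carrier, s ∈ S.grading 2 ∧
      D.j.toAlgHom (ξ i) = ι.toAlgHom s) :
    (∀ x : D.alg.carrier, x ∈ Algebra.adjoin F ({D.t} ∪ Set.range ξ) →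
      ψt x (ut ^ n) = 0) ∧
    (∀ x : D.alg.carrier, x ∈ Algebra.adjoin F ({D.t} ∪ Set.range ξ) →
      (∃ y : D.alg.carrier, x = D.t * y) →
      ∃ y : D.alg.carrier, x = D.t * y ∧
        ∃ s : S.carrier, D.j.toAlgHom y = ι.toAlgHom s) := by

  -- Key claim: every element of the adjoined subalgebra kills ψt on the left.
  have key : ∀ x : D.alg.carrier, x ∈ Algebra.adjoin F ({D.t} ∪ Set.range ξ) →
      ∀ z : D.alg.carrier, ψt x z = 0 := by
    intro x hx
    induction hx using Algebra.adjoin_induction with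
    | mem a ha =>
      rcases ha with ha | ⟨i, rfl⟩
      · intro z
        rcases ha with rfl
        exact hext.t_zero z
      · intro z
        exact hext.div (ξ i) (hξ_mem i) (hξ i) z
    | algebraMap r =>
      intro z
      rw [Algebra.algebraMap_eq_smul_one, map_smul, LinearMap.smul_apply,
        hext.one, smul_zero]
    | add a b ha hb hA hB =>
      intro z
      rw [map_add, LinearMap.add_apply, hA, hB, add_zero]
    | mul a b ha hb hA hB =>
      intro z
      have h := hext.assoc a b z
      simp only [hA, hB, mul_zero, zero_mul, sub_zero, zero_sub, zero_add,
        add_zero, neg_eq_zero] at h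
      exact h
  constructor
  · intro x hx
    exact key x hx _
  · rintro x hx ⟨y, rfl⟩
    refine ⟨y, rfl, ?_⟩
    -- j(ψt y z) = 0 for every z
    have hjt : D.j.toAlgHom D.t = 0 := (D.j_ker D.t).2 ⟨1, (mul_one _).symm⟩
    have hψy : ∀ z : D.alg.carrier, ψA (D.j.toAlgHom y) (D.j.toAlgHom z) = 0 := by
      intro z
      have h := hext.assoc D.t y z
      rw [key _ hx, hext.t_zero, hext.t_zero, zero_mul, sub_zero, add_zero,
        sub_zero] at h
      rcases (D.t_ann (ψt y z)).1 h with ⟨w, hw⟩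
      rw [← hext.compat, hw, map_mul, hjt, zero_mul]
    obtain ⟨z, hz⟩ := D.j_surj (ι.toAlgHom 1 * u ^ n)
    have h0 := hψy z
    rw [hz] at h0
    obtain ⟨c, hc⟩ := hT.free.2 (D.j.toAlgHom y)
    have hcb : (∑ i : Fin (n + 1), ι.toAlgHom (c i) * u ^ (i : ℕ)) =
        D.j.toAlgHom y := hc
    rw [← hcb, map_sum, LinearMap.sum_apply] at h0
    have hterm : ∀ i : Fin (n + 1),
        ψA (ι.toAlgHom (c i) * u ^ (i : ℕ)) (ι.toAlgHom 1 * u ^ n) =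
          if n + 1 ≤ (i : ℕ) + n then ι.toAlgHom (c i) * u ^ ((i : ℕ) + n - (n + 1))
          else 0 := by
      intro i
      rw [hψA (c i) 1 i n (Nat.lt_succ_iff.1 i.isLt) le_rfl, mul_one]
    set c' : Fin (n + 1) → S.carrier := fun k =>
      if h : (k : ℕ) + 1 ≤ n then c ⟨(k : ℕ) + 1, by omega⟩ else 0 with hc'
    have hsum : (∑ i : Fin (n + 1),
        ι.toAlgHom (c' i) * u ^ (i : ℕ)) = 0 := by
      rw [← h0, Finset.sum_congr rfl (fun i _ => hterm i)]
      conv_lhs => rw [Fin.sum_univ_castSucc]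
      conv_rhs => rw [Fin.sum_univ_succ]
      have hlast : c' (Fin.last n) = 0 := by
        simp [hc', Fin.last]
      have h00 : (if n + 1 ≤ ((0 : Fin (n + 1)) : ℕ) + n then
          ι.toAlgHom (c 0) * u ^ (((0 : Fin (n + 1)) : ℕ) + n - (n + 1))
          else 0) = 0 := by simp
      rw [hlast, h00]
      simp only [map_zero, zero_mul, add_zero, zero_add]
      refine Finset.sum_congr rfl fun k _ => ?_
      have hk : (k : ℕ) + 1 ≤ n := k.isLt
      have h1 : c' (Fin.castSucc k) = c k.succ := by
        simp only [hc', Fin.coe_castSucc, dif_pos hk]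
        exact congrArg c (Fin.ext rfl)
      have h2 : n + 1 ≤ ((k.succ : Fin (n + 1)) : ℕ) + n := by
        simp only [Fin.val_succ]
        omega
      have h3 : ((k.succ : Fin (n + 1)) : ℕ) + n - (n + 1) =
          ((Fin.castSucc k : Fin (n + 1)) : ℕ) := by
        simp only [Fin.val_succ, Fin.coe_castSucc]
        omega
      rw [h1, if_pos h2, h3]
    have hc'' : c' = 0 := by
      apply hT.free.1
      show (∑ i : Fin (n + 1), ι.toAlgHom (c' i) * u ^ (i : ℕ)) =
        ∑ i : Fin (n + 1), ι.toAlgHom ((0 : Fin (n + 1) → S.carrier) i) * u ^ (i : ℕ)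
      rw [hsum]
      simp
    have hczero : ∀ i : Fin n, c i.succ = 0 := by
      intro i
      have h3 := congrFun hc'' (Fin.castSucc i)
      simp only [hc', Fin.coe_castSucc, Pi.zero_apply] at h3
      rw [dif_pos (Nat.succ_le_of_lt i.isLt)] at h3
      exact h3
    refine ⟨c 0, ?_⟩
    rw [← hcb, Fin.sum_univ_succ]
    have hz0 : ∀ i : Fin n,
        ι.toAlgHom (c i.succ) * u ^ ((i.succ : Fin (n + 1)) : ℕ) = 0 := by
      intro i
      rw [hczero i, map_zero, zero_mul]
    rw [Finset.sum_congr rfl (fun i _ => hz0 i)]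
    simp
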